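/- Let d = 2, G(t,y) = (2π)^{−1}(t² − |y|²)^{−1/2}·1_{{|y|<t}}, and fix T, R > 0 and γ₂ ∈ (0,1]. Let v₀ : ℝ² → ℝ be γ₂-Hölder continuous with finite seminorm ‖v₀‖_{γ₂} = sup_{x≠y} |v₀(x)−v₀(y)|/|x−y|^{γ₂}. Then for all 0 < t ≤ t̄ ≤ T and all x ∈ ℝ² with |x| ≤ R: |∫_{ℝ²} G(t,y) v₀(x−y) dy − ∫_{ℝ²} G(t̄,y) v₀(x−y) dy| ≤ T·‖v₀‖_{γ₂}·|t−t̄|^{γ₂} + ‖v₀‖_{∞,R+T}·|t−t̄|, where ‖v₀‖_{∞,R+T} = sup_{|z|≤R+T} |v₀(z)|. -/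

import Mathlib

open MeasureTheory

/-- The fundamental solution of the wave operator in spatial dimension 2. -/
noncomputable def G2 (t : ℝ) (y : EuclideanSpace ℝ (Fin 2)) : ℝ :=
  if ‖y‖ < t then (2 * Real.pi)⁻¹ / Real.sqrt (t ^ 2 - ‖y‖ ^ 2) else 0

open Set Real

/-- The normalized radial profile of `G2`. -/
noncomputable def g1 (r : ℝ) : ℝ := if r < 1 then (2 * Real.pi)⁻¹ / Real.sqrt (1 - r ^ 2) else 0

lemma g1_nonneg (r : ℝ) : 0 ≤ g1 r := by
  unfold g1; split
  · positivity
  · exact le_rfl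

lemma measurable_g1 : Measurable g1 := by
  unfold g1
  exact Measurable.ite measurableSet_Iio
    (measurable_const.div ((continuous_const.sub (continuous_pow 2)).sqrt.measurable))
    measurable_const

/-- The radial density `r * g1 r`. -/
noncomputable def phi1 (r : ℝ) : ℝ := r * g1 r

lemma measurable_phi1 : Measurable phi1 := measurable_id.mul measurable_g1

lemma integrableOn_phi1_Ioo : IntegrableOn phi1 (Ioo 0 1) := by
  have hmaj : IntegrableOn (fun r : ℝ => (2 * Real.pi)⁻¹ * (1 - r) ^ (-(1/2) : ℝ)) (Ioo 0 1) := by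
    have h1 : IntervalIntegrable (fun x : ℝ => x ^ (-(1/2) : ℝ)) volume 0 1 :=
      intervalIntegral.intervalIntegrable_rpow' (by norm_num)
    have h2 := (h1.comp_sub_left 1)
    simp only [sub_zero, sub_self] at h2
    have h3 := (h2.symm.smul ((2 * Real.pi)⁻¹))
    rw [intervalIntegrable_iff_integrableOn_Ioo_of_le (by norm_num)] at h3
    simpa [smul_eq_mul, Pi.smul_def] using h3
  refine hmaj.mono' measurable_phi1.aestronglyMeasurable ?_
  filter_upwards [ae_restrict_mem measurableSet_Ioo] with r hr
  obtain ⟨hr0, hr1⟩ := hr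
  have h1r : (0:ℝ) < 1 - r := by linarith
  have hs : Real.sqrt (1 - r) ≤ Real.sqrt (1 - r ^ 2) := by
    apply Real.sqrt_le_sqrt; nlinarith
  have hspos : 0 < Real.sqrt (1 - r) := Real.sqrt_pos.2 h1r
  have h2pos : 0 < Real.sqrt (1 - r ^ 2) := lt_of_lt_of_le hspos hs
  have hrw : (1 - r) ^ (-(1/2) : ℝ) = 1 / Real.sqrt (1 - r) := by
    rw [Real.rpow_neg h1r.le, Real.sqrt_eq_rpow]
    norm_num
  have hphi : phi1 r = (2 * Real.pi)⁻¹ * (r / Real.sqrt (1 - r ^ 2)) := by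
    unfold phi1 g1; rw [if_pos hr1]; ring
  have hnn : 0 ≤ phi1 r := mul_nonneg hr0.le (g1_nonneg r)
  rw [Real.norm_eq_abs, abs_of_nonneg hnn, hphi, hrw]
  have hc : (0:ℝ) ≤ (2 * Real.pi)⁻¹ := by positivity
  apply mul_le_mul_of_nonneg_left _ hc
  rw [div_le_div_iff₀ h2pos hspos]
  nlinarith [hs, Real.sqrt_nonneg (1 - r ^ 2)]

lemma phi1_eq_zero {r : ℝ} (hr : 1 ≤ r) : phi1 r = 0 := by
  unfold phi1 g1; rw [if_neg (not_lt.2 hr), mul_zero]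

lemma integrableOn_phi1_Ioi : IntegrableOn phi1 (Ioi 0) := by
  have : IntegrableOn phi1 (Ioo 0 1 ∪ Ici 1) := by
    refine integrableOn_phi1_Ioo.union ?_
    have : IntegrableOn (fun _ : ℝ => (0:ℝ)) (Ici 1) := integrableOn_zero
    exact this.congr_fun (fun r hr => (phi1_eq_zero hr).symm) measurableSet_Ici
  exact this.mono_set (fun r hr => by
    rcases lt_or_ge r 1 with h | h
    · exact Or.inl ⟨hr, h⟩
    · exact Or.inr h)

lemma setIntegral_phi1_Ioo_le : ∫ r in Ioo (0:ℝ) 1, phi1 r ≤ (2 * Real.pi)⁻¹ := by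
  set c := (2 * Real.pi)⁻¹ with hc
  have hcpos : (0:ℝ) < c := by positivity
  have hpart : ∀ b : ℝ, b < 1 → ∫ r in Ioo (0:ℝ) b, phi1 r ≤ c := by
    intro b hb
    rcases le_or_gt b 0 with hb0 | hb0
    · rw [Ioo_eq_empty (by linarith), Measure.restrict_empty, integral_zero_measure]
      exact hcpos.le
    · have hFTC : ∫ r in (0:ℝ)..b, phi1 r
          = (fun r => -(c * Real.sqrt (1 - r ^ 2))) b
            - (fun r => -(c * Real.sqrt (1 - r ^ 2))) 0 := by
        apply intervalIntegral.integral_eq_sub_of_hasDerivAt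
        · intro r hr
          rw [Set.uIcc_of_le hb0.le] at hr
          obtain ⟨hr0, hrb⟩ := hr
          have hrlt : r < 1 := lt_of_le_of_lt hrb hb
          have hu : (0:ℝ) < 1 - r ^ 2 := by nlinarith
          have h1 : HasDerivAt (fun r : ℝ => 1 - r ^ 2) (-(2 * r)) r := by
            simpa using ((hasDerivAt_pow 2 r).const_sub 1)
          have h2 : HasDerivAt (fun r : ℝ => Real.sqrt (1 - r ^ 2))
              (1 / (2 * Real.sqrt (1 - r ^ 2)) * (-(2 * r))) r :=
            (Real.hasDerivAt_sqrt hu.ne').comp r h1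
          have h3 := (h2.const_mul c).neg
          convert h3 using 1
          · rfl
          have hsq : 0 < Real.sqrt (1 - r ^ 2) := Real.sqrt_pos.2 hu
          unfold phi1 g1
          rw [if_pos hrlt, hc]
          field_simp
        · exact (intervalIntegrable_iff_integrableOn_Ioo_of_le hb0.le).2
            (integrableOn_phi1_Ioo.mono_set (Ioo_subset_Ioo le_rfl hb.le))
      have : ∫ r in Ioo (0:ℝ) b, phi1 r = ∫ r in (0:ℝ)..b, phi1 r := by
        rw [intervalIntegral.integral_of_le hb0.le, integral_Ioc_eq_integral_Ioo]
      rw [this, hFTC]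
      simp only
      have h1 : Real.sqrt (1 - (0:ℝ) ^ 2) = 1 := by norm_num
      have h2 : 0 ≤ Real.sqrt (1 - b ^ 2) := Real.sqrt_nonneg _
      nlinarith
  have hmono : Monotone (fun n : ℕ => Ioo (0:ℝ) (1 - 1 / (n + 1))) := by
    intro m n hmn
    apply Ioo_subset_Ioo le_rfl
    have : (1:ℝ) / (n + 1) ≤ 1 / (m + 1) := by
      apply one_div_le_one_div_of_le (by positivity)
      exact_mod_cast by exact_mod_cast Nat.add_le_add_right hmn 1
    linarith
  have hunion : (⋃ n : ℕ, Ioo (0:ℝ) (1 - 1 / (n + 1))) = Ioo 0 1 := by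
    ext x
    simp only [mem_iUnion, mem_Ioo]
    constructor
    · rintro ⟨n, hx0, hx1⟩
      refine ⟨hx0, lt_of_lt_of_le hx1 ?_⟩
      have : (0:ℝ) < 1 / (n + 1) := by positivity
      linarith
    · rintro ⟨hx0, hx1⟩
      obtain ⟨n, hn⟩ := exists_nat_one_div_lt (by linarith : (0:ℝ) < 1 - x)
      exact ⟨n, hx0, by linarith⟩
  have htend := tendsto_setIntegral_of_monotone (μ := volume) (f := phi1)
    (fun n : ℕ => measurableSet_Ioo) hmono (by rw [hunion]; exact integrableOn_phi1_Ioo)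
  rw [hunion] at htend
  refine le_of_tendsto htend (Filter.Eventually.of_forall fun n => ?_)
  apply hpart
  have : (0:ℝ) < 1 / (n + 1) := by positivity
  linarith

lemma setIntegral_phi1_Ioi_le : ∫ r in Ioi (0:ℝ), phi1 r ≤ (2 * Real.pi)⁻¹ := by
  have hset : Ioo (0:ℝ) 1 ∪ Ici 1 = Ioi 0 := by
    ext x
    simp only [mem_union, mem_Ioo, mem_Ici, mem_Ioi]
    constructor
    · rintro (⟨h, _⟩ | h) <;> linarith
    · intro h
      rcases lt_or_ge x 1 with h1 | h1
      · exact Or.inl ⟨h, h1⟩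
      · exact Or.inr h1
  have hdisj : Disjoint (Ioo (0:ℝ) 1) (Ici 1) := by
    rw [Set.disjoint_left]
    rintro x ⟨_, h1⟩ h2
    exact absurd h2 (not_le.2 h1)
  have hIci : IntegrableOn phi1 (Ici (1:ℝ)) :=
    (integrableOn_zero (μ := volume)).congr_fun (fun r hr => (phi1_eq_zero hr).symm)
      measurableSet_Ici
  have h0 : ∫ r in Ici (1:ℝ), phi1 r = 0 := by
    rw [setIntegral_congr_fun measurableSet_Ici (fun r hr => phi1_eq_zero hr)]
    simp
  calc ∫ r in Ioi (0:ℝ), phi1 r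
      = ∫ r in Ioo (0:ℝ) 1 ∪ Ici 1, phi1 r := by rw [hset]
    _ = (∫ r in Ioo (0:ℝ) 1, phi1 r) + ∫ r in Ici (1:ℝ), phi1 r :=
        setIntegral_union hdisj measurableSet_Ici integrableOn_phi1_Ioo hIci
    _ ≤ (2 * Real.pi)⁻¹ := by rw [h0, add_zero]; exact setIntegral_phi1_Ioo_le

/-- The radial extension of `g1` to the plane is integrable. -/
lemma integrable_g1norm : Integrable (fun z : EuclideanSpace ℝ (Fin 2) => g1 ‖z‖) := by
  set e : EuclideanSpace ℝ (Fin 2) ≃ᵐ ℝ × ℝ :=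
    (MeasurableEquiv.toLp 2 (Fin 2 → ℝ)).symm.trans (MeasurableEquiv.finTwoArrow)
  have hmp : MeasurePreserving e volume volume :=
    (volume_preserving_finTwoArrow ℝ).comp
      (EuclideanSpace.volume_preserving_symm_measurableEquiv_toLp (Fin 2))
  set h : ℝ × ℝ → ℝ := fun p => g1 (Real.sqrt (p.1 ^ 2 + p.2 ^ 2)) with hh
  have hcomp : (fun z : EuclideanSpace ℝ (Fin 2) => g1 ‖z‖) = h ∘ e := by
    ext z
    have hnorm : ‖z‖ = Real.sqrt (z 0 ^ 2 + z 1 ^ 2) := by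
      rw [EuclideanSpace.norm_eq]
      norm_num [Fin.sum_univ_two, sq_abs]
    simp only [Function.comp_apply, hh]
    congr 1
  have hint_h : Integrable h := by
    set B : ℝ × ℝ → ℝ × ℝ →L[ℝ] ℝ × ℝ := fun p =>
      LinearMap.toContinuousLinearMap (Matrix.toLin (Module.Basis.finTwoProd ℝ) (Module.Basis.finTwoProd ℝ)
        !![Real.cos p.2, -p.1 * Real.sin p.2; Real.sin p.2, p.1 * Real.cos p.2])
    have hder : ∀ p ∈ polarCoord.target, HasFDerivWithinAt polarCoord.symm (B p)
        polarCoord.target p := fun p _ =>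
      (hasFDerivAt_polarCoord_symm p).hasFDerivWithinAt
    have B_det : ∀ p, (B p).det = p.1 := by
      intro p
      conv_rhs => rw [← one_mul p.1, ← Real.cos_sq_add_sin_sq p.2]
      simp only [B, neg_mul, LinearMap.det_toContinuousLinearMap, LinearMap.det_toLin,
        Matrix.det_fin_two_of, sub_neg_eq_add]
      ring
    have hinj : Set.InjOn polarCoord.symm polarCoord.target :=
      polarCoord.symm.injOn
    have himg : polarCoord.symm '' polarCoord.target = polarCoord.source := by
      rw [← polarCoord.symm_image_target_eq_source]
    have hiff := integrableOn_image_iff_integrableOn_abs_det_fderiv_smul volume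
      polarCoord.open_target.measurableSet hder hinj h
    rw [himg] at hiff
    have hsrc : IntegrableOn h polarCoord.source := by
      rw [hiff]
      have : IntegrableOn (fun p : ℝ × ℝ => (fun r => r * g1 r) p.1)
          (Ioi (0:ℝ) ×ˢ Ioo (-Real.pi) Real.pi) := by
        rw [IntegrableOn, Measure.volume_eq_prod, ← Measure.prod_restrict]
        have h2 : Integrable (fun _ : ℝ => (1:ℝ)) (volume.restrict (Ioo (-Real.pi) Real.pi)) := by
          rw [← IntegrableOn]
          exact integrableOn_const (by rw [Real.volume_Ioo]; exact ENNReal.ofReal_ne_top)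
        simpa [phi1] using Integrable.mul_prod integrableOn_phi1_Ioi h2
      apply this.congr_fun _ polarCoord.open_target.measurableSet
      rintro ⟨r, θ⟩ hp
      have hr : 0 < r := hp.1
      have hsymm : polarCoord.symm (r, θ) = (r * Real.cos θ, r * Real.sin θ) := rfl
      have hsq : (r * Real.cos θ) ^ 2 + (r * Real.sin θ) ^ 2 = r ^ 2 := by
        nlinarith [Real.sin_sq_add_cos_sq θ]
      simp only [B_det, smul_eq_mul, hh, hsymm]
      rw [hsq, Real.sqrt_sq hr.le, abs_of_pos hr]
    rw [← integrableOn_univ]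
    exact hsrc.congr_set_ae polarCoord_source_ae_eq_univ.symm
  rw [hcomp]
  exact (hmp.integrable_comp_emb e.measurableEmbedding).2 hint_h

/-- The total mass of the radial extension of `g1` is at most `1` (it is in fact `1`). -/
lemma integral_g1norm_le : ∫ z : EuclideanSpace ℝ (Fin 2), g1 ‖z‖ ≤ 1 := by
  rw [integral_fun_norm_addHaar (volume : Measure (EuclideanSpace ℝ (Fin 2))) g1]
  have hdim : Module.finrank ℝ (EuclideanSpace ℝ (Fin 2)) = 2 := finrank_euclideanSpace_fin
  rw [hdim]
  have hball : volume.real (Metric.ball (0 : EuclideanSpace ℝ (Fin 2)) 1) = Real.pi := by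
    rw [measureReal_def, EuclideanSpace.volume_ball]
    simp only [Fintype.card_fin]
    norm_num
    exact Real.sq_sqrt Real.pi_pos.le
  rw [hball]
  have : ∫ y in Ioi (0:ℝ), y ^ (2 - 1) • g1 y = ∫ r in Ioi (0:ℝ), phi1 r := by
    apply setIntegral_congr_fun measurableSet_Ioi
    intro y _
    simp [phi1, smul_eq_mul]
  rw [this]
  rw [nsmul_eq_mul, smul_eq_mul]
  have hpi := Real.pi_pos
  calc (2:ℝ) * (Real.pi * ∫ r in Ioi (0:ℝ), phi1 r) ≤ 2 * (Real.pi * (2 * Real.pi)⁻¹) := by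
        apply mul_le_mul_of_nonneg_left _ (by norm_num)
        exact mul_le_mul_of_nonneg_left setIntegral_phi1_Ioi_le hpi.le
    _ = 1 := by field_simp

/-- Change of variables `y = s • z` for the convolution with `G2`. -/
lemma G2_conv_eq (v₀ : EuclideanSpace ℝ (Fin 2) → ℝ) (x : EuclideanSpace ℝ (Fin 2))
    (s : ℝ) (hs : 0 < s) :
    (∫ y : EuclideanSpace ℝ (Fin 2), G2 s y * v₀ (x - y))
      = ∫ z : EuclideanSpace ℝ (Fin 2), g1 ‖z‖ * (s * v₀ (x - s • z)) := by
  have hcov := Measure.integral_comp_smul (volume : Measure (EuclideanSpace ℝ (Fin 2)))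
    (fun y => G2 s y * v₀ (x - y)) s
  rw [finrank_euclideanSpace_fin] at hcov
  have habs : |((s ^ 2)⁻¹ : ℝ)| = (s ^ 2)⁻¹ := abs_of_pos (by positivity)
  rw [habs, smul_eq_mul] at hcov
  have hpt : ∀ z : EuclideanSpace ℝ (Fin 2),
      g1 ‖z‖ * (s * v₀ (x - s • z)) = s ^ 2 * (G2 s (s • z) * v₀ (x - s • z)) := by
    intro z
    have hns : ‖s • z‖ = s * ‖z‖ := by
      rw [norm_smul, Real.norm_eq_abs, abs_of_pos hs]
    by_cases h : ‖z‖ < 1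
    · have hlt : ‖s • z‖ < s := by rw [hns]; nlinarith [norm_nonneg z]
      have hu : (0:ℝ) < 1 - ‖z‖ ^ 2 := by nlinarith [norm_nonneg z]
      have hsqrt : Real.sqrt (s ^ 2 - ‖s • z‖ ^ 2) = s * Real.sqrt (1 - ‖z‖ ^ 2) := by
        rw [hns, mul_pow, show s ^ 2 - s ^ 2 * ‖z‖ ^ 2 = s ^ 2 * (1 - ‖z‖ ^ 2) by ring,
          Real.sqrt_mul (sq_nonneg s), Real.sqrt_sq hs.le]
      rw [g1, if_pos h, G2, if_pos hlt, hsqrt]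
      have h2 : (0:ℝ) < Real.sqrt (1 - ‖z‖ ^ 2) := Real.sqrt_pos.2 hu
      field_simp
    · rw [g1, if_neg h, G2, if_neg (by rw [hns]; intro hc; apply h; nlinarith [norm_nonneg z])]
      ring
  calc (∫ y : EuclideanSpace ℝ (Fin 2), G2 s y * v₀ (x - y))
      = s ^ 2 * ((s ^ 2)⁻¹ * ∫ y : EuclideanSpace ℝ (Fin 2), G2 s y * v₀ (x - y)) := by
        field_simp
    _ = s ^ 2 * ∫ z : EuclideanSpace ℝ (Fin 2), G2 s (s • z) * v₀ (x - s • z) := by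
        rw [← hcov]
    _ = ∫ z : EuclideanSpace ℝ (Fin 2), s ^ 2 * (G2 s (s • z) * v₀ (x - s • z)) := by
        rw [integral_const_mul]
    _ = _ := by
        congr 1; ext z; rw [hpt z]

/-- time increments of `G(t) ∗ v₀` in dimension 2 for a `γ₂`-Hölder
function `v₀`, with Hölder constant `K` and sup bound `M` on the ball of radius `R+T`. -/
theorem stmt7 (T R γ₂ K M : ℝ) (hT : 0 < T) (hR : 0 < R) (hγ : 0 < γ₂) (hγ' : γ₂ ≤ 1)
    (v₀ : EuclideanSpace ℝ (Fin 2) → ℝ)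
    (hK : ∀ a b : EuclideanSpace ℝ (Fin 2), |v₀ a - v₀ b| ≤ K * ‖a - b‖ ^ γ₂)
    (hM : ∀ z : EuclideanSpace ℝ (Fin 2), ‖z‖ ≤ R + T → |v₀ z| ≤ M) :
    ∀ t t' : ℝ, 0 < t → t ≤ t' → t' ≤ T →
      ∀ x : EuclideanSpace ℝ (Fin 2), ‖x‖ ≤ R →
      |(∫ y : EuclideanSpace ℝ (Fin 2), G2 t y * v₀ (x - y))
          - ∫ y : EuclideanSpace ℝ (Fin 2), G2 t' y * v₀ (x - y)|
        ≤ T * K * |t - t'| ^ γ₂ + M * |t - t'| := by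
  have hK0 : 0 ≤ K := by
    have h := hK (EuclideanSpace.single 0 1) 0
    rw [sub_zero] at h
    have hn : ‖EuclideanSpace.single (0 : Fin 2) (1:ℝ)‖ = 1 := by
      rw [EuclideanSpace.norm_single]; norm_num
    rw [hn, Real.one_rpow, mul_one] at h
    exact le_trans (abs_nonneg _) h
  have hM0 : 0 ≤ M := by
    have h := hM 0 (by rw [norm_zero]; positivity)
    exact le_trans (abs_nonneg _) h
  have hcont : Continuous v₀ := by
    rw [Metric.continuous_iff]
    intro b ε hε
    refine ⟨(ε / (K + 1)) ^ (1 / γ₂), Real.rpow_pos_of_pos (by positivity) _, fun a ha => ?_⟩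
    have hbase : (0:ℝ) < ε / (K + 1) := by positivity
    have hd : dist a b = ‖a - b‖ := dist_eq_norm a b
    have h1 : ‖a - b‖ ^ γ₂ < ((ε / (K + 1)) ^ (1 / γ₂)) ^ γ₂ :=
      Real.rpow_lt_rpow (norm_nonneg _) (by rwa [← hd]) hγ
    rw [← Real.rpow_mul hbase.le, one_div, inv_mul_cancel₀ hγ.ne', Real.rpow_one] at h1
    have h2 : |v₀ a - v₀ b| ≤ K * ‖a - b‖ ^ γ₂ := hK a b
    have h3 : K * ‖a - b‖ ^ γ₂ ≤ K * (ε / (K + 1)) :=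
      mul_le_mul_of_nonneg_left h1.le hK0
    rw [Real.dist_eq]
    calc |v₀ a - v₀ b| ≤ K * (ε / (K + 1)) := le_trans h2 h3
      _ < ε := by
          rw [show K * (ε / (K + 1)) = K * ε / (K + 1) by ring, div_lt_iff₀ (by positivity)]
          nlinarith
  intro t t' ht htt' ht'T x hx
  have ht' : 0 < t' := lt_of_lt_of_le ht htt'
  have htT : t ≤ T := le_trans htt' ht'T
  set C := T * K * |t - t'| ^ γ₂ + M * |t - t'| with hC
  have hC0 : 0 ≤ C :=
    add_nonneg (mul_nonneg (mul_nonneg hT.le hK0) (Real.rpow_nonneg (abs_nonneg _) _))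
      (mul_nonneg hM0 (abs_nonneg _))
  -- integrability of the rescaled integrands
  have hint : ∀ s : ℝ, 0 < s → s ≤ T →
      Integrable (fun z : EuclideanSpace ℝ (Fin 2) => g1 ‖z‖ * (s * v₀ (x - s • z))) := by
    intro s hs hsT
    have hb : Integrable (fun z : EuclideanSpace ℝ (Fin 2) => (T * M) * g1 ‖z‖) :=
      integrable_g1norm.const_mul _
    refine hb.mono' ?_ (Filter.Eventually.of_forall fun z => ?_)
    · exact ((measurable_g1.comp measurable_norm).aestronglyMeasurable).mul
        ((continuous_const.mul
          (hcont.comp (continuous_const.sub (continuous_id.const_smul s)))).aestronglyMeasurable)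
    · rw [Real.norm_eq_abs, abs_mul, abs_of_nonneg (g1_nonneg _)]
      by_cases h : ‖z‖ < 1
      · have hxz : ‖x - s • z‖ ≤ R + T := by
          calc ‖x - s • z‖ ≤ ‖x‖ + ‖s • z‖ := norm_sub_le _ _
            _ = ‖x‖ + s * ‖z‖ := by rw [norm_smul, Real.norm_eq_abs, abs_of_pos hs]
            _ ≤ R + T := by nlinarith [norm_nonneg z]
        have hv : |s * v₀ (x - s • z)| ≤ T * M := by
          rw [abs_mul, abs_of_pos hs]
          exact mul_le_mul hsT (hM _ hxz) (abs_nonneg _) hT.le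
        calc g1 ‖z‖ * |s * v₀ (x - s • z)| ≤ g1 ‖z‖ * (T * M) :=
              mul_le_mul_of_nonneg_left hv (g1_nonneg _)
          _ = T * M * g1 ‖z‖ := by ring
      · rw [g1, if_neg h]
        simp
  -- pointwise bound of the difference
  have hptbd : ∀ z : EuclideanSpace ℝ (Fin 2),
      ‖g1 ‖z‖ * (t * v₀ (x - t • z)) - g1 ‖z‖ * (t' * v₀ (x - t' • z))‖ ≤ C * g1 ‖z‖ := by
    intro z
    rw [← mul_sub, Real.norm_eq_abs, abs_mul, abs_of_nonneg (g1_nonneg _)]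
    by_cases h : ‖z‖ < 1
    · have hxz' : ‖x - t' • z‖ ≤ R + T := by
        calc ‖x - t' • z‖ ≤ ‖x‖ + ‖t' • z‖ := norm_sub_le _ _
          _ = ‖x‖ + t' * ‖z‖ := by rw [norm_smul, Real.norm_eq_abs, abs_of_pos ht']
          _ ≤ R + T := by nlinarith [norm_nonneg z]
      have hvb : |v₀ (x - t' • z)| ≤ M := hM _ hxz'
      have hab : (x - t • z) - (x - t' • z) = (t' - t) • z := by
        rw [sub_sub_sub_cancel_left, ← sub_smul]
      have hnab : ‖(x - t • z) - (x - t' • z)‖ ≤ |t - t'| := by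
        rw [hab, norm_smul, Real.norm_eq_abs, abs_sub_comm t' t]
        calc |t - t'| * ‖z‖ ≤ |t - t'| * 1 :=
              mul_le_mul_of_nonneg_left h.le (abs_nonneg _)
          _ = |t - t'| := mul_one _
      have hdiffv : |v₀ (x - t • z) - v₀ (x - t' • z)| ≤ K * |t - t'| ^ γ₂ := by
        calc |v₀ (x - t • z) - v₀ (x - t' • z)| ≤ K * ‖(x - t • z) - (x - t' • z)‖ ^ γ₂ :=
              hK _ _
          _ ≤ K * |t - t'| ^ γ₂ :=
              mul_le_mul_of_nonneg_left
                (Real.rpow_le_rpow (norm_nonneg _) hnab hγ.le) hK0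
      have hkey : |t * v₀ (x - t • z) - t' * v₀ (x - t' • z)| ≤ C := by
        have hsplit : t * v₀ (x - t • z) - t' * v₀ (x - t' • z)
            = t * (v₀ (x - t • z) - v₀ (x - t' • z)) + (t - t') * v₀ (x - t' • z) := by ring
        rw [hsplit]
        calc |t * (v₀ (x - t • z) - v₀ (x - t' • z)) + (t - t') * v₀ (x - t' • z)|
            ≤ |t * (v₀ (x - t • z) - v₀ (x - t' • z))| + |(t - t') * v₀ (x - t' • z)| :=
              abs_add_le _ _
          _ = t * |v₀ (x - t • z) - v₀ (x - t' • z)| + |t - t'| * |v₀ (x - t' • z)| := by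
              rw [abs_mul, abs_mul, abs_of_pos ht]
          _ ≤ T * (K * |t - t'| ^ γ₂) + |t - t'| * M := by
              apply add_le_add
              · exact mul_le_mul htT hdiffv (abs_nonneg _) hT.le
              · exact mul_le_mul_of_nonneg_left hvb (abs_nonneg _)
          _ = C := by rw [hC]; ring
      calc g1 ‖z‖ * |t * v₀ (x - t • z) - t' * v₀ (x - t' • z)| ≤ g1 ‖z‖ * C :=
            mul_le_mul_of_nonneg_left hkey (g1_nonneg _)
        _ = C * g1 ‖z‖ := mul_comm _ _
    · rw [g1, if_neg h]
      simp
  have h1 := hint t ht htT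
  have h2 := hint t' ht' ht'T
  rw [G2_conv_eq v₀ x t ht, G2_conv_eq v₀ x t' ht', ← integral_sub h1 h2]
  calc |∫ z : EuclideanSpace ℝ (Fin 2),
        (g1 ‖z‖ * (t * v₀ (x - t • z)) - g1 ‖z‖ * (t' * v₀ (x - t' • z)))|
      ≤ ∫ z : EuclideanSpace ℝ (Fin 2),
          ‖g1 ‖z‖ * (t * v₀ (x - t • z)) - g1 ‖z‖ * (t' * v₀ (x - t' • z))‖ :=
        by rw [← Real.norm_eq_abs]; exact norm_integral_le_integral_norm _
    _ ≤ ∫ z : EuclideanSpace ℝ (Fin 2), C * g1 ‖z‖ :=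
        integral_mono (h1.sub h2).norm (integrable_g1norm.const_mul C)
          (fun z => hptbd z)
    _ = C * ∫ z : EuclideanSpace ℝ (Fin 2), g1 ‖z‖ := integral_const_mul _ _
    _ ≤ C * 1 := mul_le_mul_of_nonneg_left integral_g1norm_le hC0
    _ = C := mul_one _
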